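/- arXiv:1005.4348 — 7 statements merged into one kernel-verified Lean document; each statement's English description precedes it below -/
import Mathlib

section
/- Let ρ be a positive semidefinite d_A·d_B × d_A·d_B complex matrix that is generalized-classical with respect to the second party, i.e. ρ = Σ_{m=1}^n ρ_m ⊗ (b_m b_m†) (Kronecker product) for some linearly independent vectors b_1, …, b_n ∈ ℂ^{d_B} and positive semidefinite d_A × d_A matrices ρ_1, …, ρ_n. Then, with r = rank ρ, there exist vectors u_1, …, u_r ∈ ℂ^{d_A} and v_1, …, v_r ∈ ℂ^{d_B} such that the product vectors u_k ⊗ v_k (Kronecker/tensor product of vectors) for k = 1, …, r are linearly independent and ρ = Σ_{k=1}^r (u_k ⊗ v_k)(u_k ⊗ v_k)†. -/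
open Matrix
open scoped Kronecker ComplexOrder

/-- The outer product `v v†` of a vector with itself. -/
def outer {n : Type*} (v : n → ℂ) : Matrix n n ℂ :=
  Matrix.vecMulVec v (star v)

/-- The Kronecker (tensor) product of two vectors. -/
def kronVec {m n : Type*} (u : m → ℂ) (v : n → ℂ) : m × n → ℂ :=
  fun p => u p.1 * v p.2

lemma rank_sum_outer {d : Type*} [Fintype d] [DecidableEq d] {ι : Type*} [Fintype ι]
    (v : ι → d → ℂ) (hv : LinearIndependent ℂ v) :
    (∑ k, outer (v k)).rank = Fintype.card ι := by
  set A : Matrix d ι ℂ := Matrix.of (fun i k => v k i) with hA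
  have h1 : (∑ k, outer (v k)) = A * Aᴴ := by
    ext i j
    simp [outer, vecMulVec, mul_apply, conjTranspose_apply, hA, Matrix.sum_apply]
  rw [h1, Matrix.rank_self_mul_conjTranspose, Matrix.rank_eq_finrank_span_cols]
  have h2 : Set.range A.col = Set.range v := by congr 1
  rw [h2, finrank_span_eq_card hv]

lemma psd_decomp {d : ℕ} (M : Matrix (Fin d) (Fin d) ℂ) (hM : M.PosSemidef) :
    ∃ w : Fin M.rank → (Fin d → ℂ), LinearIndependent ℂ w ∧ M = ∑ k, outer (w k) := by
  classical
  have hH := hM.1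
  set ev := hH.eigenvalues with hev
  set U : Matrix (Fin d) (Fin d) ℂ := (hH.eigenvectorUnitary : Matrix (Fin d) (Fin d) ℂ) with hU
  set u : Fin d → (Fin d → ℂ) := fun k => fun i => U i k with hu
  have hUind : LinearIndependent ℂ u := by
    have hbasis := (hH.eigenvectorBasis.toBasis).linearIndependent
    have : u = fun k => ⇑(hH.eigenvectorBasis k) := by
      funext k i
      simp [hu, hU, Matrix.IsHermitian.eigenvectorUnitary_apply]
    rw [this]
    exact hbasis.map' (WithLp.linearEquiv 2 ℂ (Fin d → ℂ)).toLinearMap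
      (LinearEquiv.ker _)
  set w0 : Fin d → (Fin d → ℂ) := fun k => (Real.sqrt (ev k) : ℂ) • u k with hw0
  have hentry : ∀ i j, M i j = ∑ k, (ev k : ℂ) * (U i k * star (U j k)) := by
    intro i j
    conv_lhs => rw [hH.spectral_theorem]
    rw [Unitary.conjStarAlgAut_apply]
    rw [mul_assoc, Matrix.mul_apply]
    apply Finset.sum_congr rfl
    intro k _
    rw [Matrix.diagonal_mul, Matrix.star_apply]
    have : (RCLike.ofReal ∘ hH.eigenvalues) k = ((ev k : ℝ) : ℂ) := rfl
    rw [this]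
    ring
  have houter : ∀ k i j, outer (w0 k) i j = (ev k : ℂ) * (U i k * star (U j k)) := by
    intro k i j
    simp only [outer, vecMulVec_apply, Pi.star_apply, hw0, Pi.smul_apply, smul_eq_mul, hu,
      star_mul', RCLike.star_def, Complex.conj_ofReal]
    have : (Real.sqrt (ev k) : ℂ) * (Real.sqrt (ev k) : ℂ) = (ev k : ℂ) := by
      rw [← Complex.ofReal_mul, Real.mul_self_sqrt (hM.eigenvalues_nonneg k)]
    rw [show (Real.sqrt (ev k) : ℂ) * U i k * ((Real.sqrt (ev k) : ℂ) * (starRingEnd ℂ) (U j k))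
        = ((Real.sqrt (ev k) : ℂ) * (Real.sqrt (ev k) : ℂ)) * (U i k * (starRingEnd ℂ) (U j k)) from by ring,
      this]
  have hsum : M = ∑ k : {k // ev k ≠ 0}, outer (w0 k) := by
    have hmem : ∀ x, x ∈ Finset.univ.filter (fun k => ev k ≠ 0) ↔ ev x ≠ 0 := fun x => by
      simp only [Finset.mem_filter, Finset.mem_univ, true_and]
    have e1 : ∑ k ∈ Finset.univ.filter (fun k => ev k ≠ 0), outer (w0 k)
        = ∑ k : {k // ev k ≠ 0}, outer (w0 k.val) :=
      Finset.sum_subtype _ hmem _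
    have e2 : ∑ k ∈ Finset.univ.filter (fun k => ev k ≠ 0), outer (w0 k)
        = ∑ k : Fin d, outer (w0 k) := by
      apply Finset.sum_filter_of_ne
      intro k _ h hk
      apply h
      ext i j
      rw [houter, hk]
      simp
    rw [← e1, e2]
    ext i j
    rw [hentry i j, Matrix.sum_apply]
    exact Finset.sum_congr rfl fun k _ => (houter k i j).symm
  have hind : LinearIndependent ℂ (fun k : {k // ev k ≠ 0} => w0 k.val) := by
    have h1 : LinearIndependent ℂ (fun k : {k // ev k ≠ 0} => u k.val) :=
      hUind.comp Subtype.val Subtype.val_injective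
    have h2 := h1.units_smul (fun k : {k // ev k ≠ 0} =>
      Units.mk0 ((Real.sqrt (ev k.val) : ℂ))
        (by
          simp only [ne_eq, Complex.ofReal_eq_zero]
          exact Real.sqrt_ne_zero'.mpr (lt_of_le_of_ne (hM.eigenvalues_nonneg k.val) (Ne.symm k.prop))))
    exact h2
  have hcard : Fintype.card (Fin M.rank) = Fintype.card {k // ev k ≠ 0} := by
    rw [Fintype.card_fin, hH.rank_eq_card_non_zero_eigs]
  let e := Fintype.equivOfCardEq hcard
  refine ⟨fun k => w0 (e k).val, hind.comp e e.injective, ?_⟩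
  exact hsum.trans (Equiv.sum_comp e (fun k : {k // ev k ≠ 0} => outer (w0 k.val))).symm

lemma kron_indep {dA dB n : ℕ} {b : Fin n → (Fin dB → ℂ)} (hb : LinearIndependent ℂ b)
    {r : Fin n → ℕ} {u : (m : Fin n) → Fin (r m) → (Fin dA → ℂ)}
    (hu : ∀ m, LinearIndependent ℂ (u m)) :
    LinearIndependent ℂ (fun p : (Σ m : Fin n, Fin (r m)) => kronVec (u p.1 p.2) (b p.1)) := by
  rw [Fintype.linearIndependent_iff]
  intro g hg p
  rw [Fintype.linearIndependent_iff] at hb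
  have key : ∀ m : Fin n, ∀ a : Fin dA, ∑ j : Fin (r m), g ⟨m, j⟩ * u m j a = 0 := by
    intro m a
    have h1 : ∀ β : Fin dB,
        ∑ m' : Fin n, (∑ j : Fin (r m'), g ⟨m', j⟩ * u m' j a) * b m' β = 0 := by
      intro β
      have := congrFun hg (a, β)
      simp only [Finset.sum_apply, Pi.smul_apply, smul_eq_mul, kronVec, Pi.zero_apply] at this
      rw [← this, ← Finset.univ_sigma_univ, Finset.sum_sigma]
      apply Finset.sum_congr rfl
      intro m' _
      rw [Finset.sum_mul]
      exact Finset.sum_congr rfl fun j _ => by ring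
    have := hb (fun m' => ∑ j : Fin (r m'), g ⟨m', j⟩ * u m' j a) (by
      funext β
      simpa [Finset.sum_apply] using h1 β) m
    exact this
  have hum := Fintype.linearIndependent_iff.mp (hu p.1) (fun j => g ⟨p.1, j⟩) (by
    funext a
    simpa [Finset.sum_apply] using key p.1 a) p.2
  exact hum

lemma outer_kron {dA dB : ℕ} (u : Fin dA → ℂ) (v : Fin dB → ℂ) :
    outer u ⊗ₖ outer v = outer (kronVec u v) := by
  ext p q
  simp only [kroneckerMap_apply, outer, vecMulVec_apply, Pi.star_apply, kronVec, star_mul']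
  ring

/-- A bipartite state which is generalized-classical with respect to the
second party is a minimal length separable state. -/
theorem genClassical_is_minimal_length
    {dA dB n : ℕ}
    (ρ : Matrix (Fin dA × Fin dB) (Fin dA × Fin dB) ℂ)
    (hρ : ρ.PosSemidef)
    (b : Fin n → (Fin dB → ℂ)) (hb : LinearIndependent ℂ b)
    (ρm : Fin n → Matrix (Fin dA) (Fin dA) ℂ)
    (hρm : ∀ m, (ρm m).PosSemidef)
    (hdecomp : ρ = ∑ m, ρm m ⊗ₖ outer (b m)) :
    ∃ (u : Fin ρ.rank → (Fin dA → ℂ)) (v : Fin ρ.rank → (Fin dB → ℂ)),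
      LinearIndependent ℂ (fun k => kronVec (u k) (v k)) ∧
      ρ = ∑ k, outer (kronVec (u k) (v k)) := by
  classical
  choose w hw1 hw2 using fun m => psd_decomp (ρm m) (hρm m)
  -- the sigma-indexed family
  set f : (Σ m : Fin n, Fin (ρm m).rank) → (Fin dA × Fin dB → ℂ) :=
    fun p => kronVec (w p.1 p.2) (b p.1) with hf
  have hfind : LinearIndependent ℂ f := kron_indep hb hw1
  have hρsum : ρ = ∑ p : (Σ m : Fin n, Fin (ρm m).rank), outer (f p) := by
    rw [hdecomp, ← Finset.univ_sigma_univ, Finset.sum_sigma]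
    apply Finset.sum_congr rfl
    intro m _
    conv_lhs => rw [hw2 m]
    rw [show (∑ k, outer (w m k)) ⊗ₖ outer (b m) = ∑ k, (outer (w m k) ⊗ₖ outer (b m)) from by
      ext p q
      simp only [kroneckerMap_apply, Matrix.sum_apply, Finset.sum_mul]]
    exact Finset.sum_congr rfl fun k _ => outer_kron _ _
  have hcard : Fintype.card (Fin ρ.rank) = Fintype.card (Σ m : Fin n, Fin (ρm m).rank) := by
    rw [Fintype.card_fin, hρsum, rank_sum_outer f hfind]
  let e := Fintype.equivOfCardEq hcard
  refine ⟨fun k => w (e k).1 (e k).2, fun k => b (e k).1, ?_, ?_⟩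
  · exact hfind.comp e e.injective
  · calc ρ = ∑ p : (Σ m : Fin n, Fin (ρm m).rank), outer (f p) := hρsum
      _ = ∑ k : Fin ρ.rank, outer (f (e k)) := (Equiv.sum_comp e (fun p => outer (f p))).symm
end

section
/- Let ρ be a d_A·d_B × d_A·d_B complex matrix such that ρ = Σ_{i=1}^{d_B} R_i ⊗ (b_i b_i†) for some orthonormal basis b_1, …, b_{d_B} of ℂ^{d_B} and positive semidefinite d_A × d_A matrices R_i, and also ρ = Σ_{j=1}^{d_A} (a_j a_j†) ⊗ S_j for some orthonormal basis a_1, …, a_{d_A} of ℂ^{d_A} and positive semidefinite d_B × d_B matrices S_j. Then there exist nonnegative real numbers c_{j i} such that ρ = Σ_{j=1}^{d_A} Σ_{i=1}^{d_B} c_{j i} · (a_j ⊗ b_i)(a_j ⊗ b_i)†. -/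
open Matrix
open scoped Kronecker ComplexOrder

private lemma swap3 {α β γ : Type*} [Fintype α] [Fintype β] [Fintype γ]
    (f : α → β → γ → ℂ) :
    ∑ x, ∑ y, ∑ z, f x y z = ∑ z, ∑ x, ∑ y, f x y z := by
  have h1 : ∀ x, ∑ y, ∑ z, f x y z = ∑ z, ∑ y, f x y z := fun x =>
    Finset.sum_comm
  simp_rw [h1]
  exact Finset.sum_comm

/-- Lemma 2, bipartite classical case: a state that is classical for both
parties is fully classical, i.e. diagonal in an orthonormal product basis. -/
theorem classical_both_parties_is_fully_classical
    {dA dB : ℕ}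
    (ρ : Matrix (Fin dA × Fin dB) (Fin dA × Fin dB) ℂ)
    (b : Fin dB → (Fin dB → ℂ))
    (hb : ∀ i j, star (b i) ⬝ᵥ b j = if i = j then 1 else 0)
    (R : Fin dB → Matrix (Fin dA) (Fin dA) ℂ) (hR : ∀ i, (R i).PosSemidef)
    (hB : ρ = ∑ i, R i ⊗ₖ outer (b i))
    (a : Fin dA → (Fin dA → ℂ))
    (ha : ∀ j k, star (a j) ⬝ᵥ a k = if j = k then 1 else 0)
    (S : Fin dA → Matrix (Fin dB) (Fin dB) ℂ) (hS : ∀ j, (S j).PosSemidef)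
    (hA : ρ = ∑ j, outer (a j) ⊗ₖ S j) :
    ∃ c : Fin dA → Fin dB → ℝ, (∀ j i, 0 ≤ c j i) ∧
      ρ = ∑ j, ∑ i, (c j i : ℂ) • outer (kronVec (a j) (b i)) := by
  classical
  refine ⟨fun j i => (star (a j) ⬝ᵥ (R i *ᵥ a j)).re, ?_, ?_⟩
  · intro j i
    have h := (hR i).dotProduct_mulVec_nonneg (a j)
    rw [Complex.nonneg_iff] at h
    exact h.1
  · have hcc : ∀ j i, (((star (a j) ⬝ᵥ (R i *ᵥ a j)).re : ℝ) : ℂ)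
        = star (a j) ⬝ᵥ (R i *ᵥ a j) := by
      intro j i
      have h := (hR i).dotProduct_mulVec_nonneg (a j)
      rw [Complex.nonneg_iff] at h
      apply Complex.ext <;> simp [h.2]
    have expandA : ∀ (p r : Fin dA) (q s : Fin dB),
        ρ (p, q) (r, s) = ∑ j', a j' p * star (a j' r) * S j' q s := by
      intro p r q s
      rw [hA]
      simp [Matrix.sum_apply, outer, Matrix.vecMulVec_apply]
    have expandB : ∀ (p r : Fin dA) (q s : Fin dB),
        ρ (p, q) (r, s) = ∑ i, R i p r * (b i q * star (b i s)) := by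
      intro p r q s
      rw [hB]
      simp [Matrix.sum_apply, outer, Matrix.vecMulVec_apply, mul_assoc]
    have key : ∀ (j : Fin dA) (q s : Fin dB),
        S j q s = ∑ i, (star (a j) ⬝ᵥ (R i *ᵥ a j)) * (b i q * star (b i s)) := by
      intro j q s
      have e1 : (∑ p, ∑ r, star (a j p) * a j r * ρ (p, q) (r, s)) = S j q s := by
        calc (∑ p, ∑ r, star (a j p) * a j r * ρ (p, q) (r, s))
            = ∑ j', (∑ p, star (a j p) * a j' p) *
                ((∑ r, star (a j' r) * a j r) * S j' q s) := by
              simp only [expandA, Finset.mul_sum]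
              rw [swap3]
              refine Finset.sum_congr rfl fun j' _ => ?_
              simp only [Finset.sum_mul, Finset.mul_sum]
              rw [Finset.sum_comm]
              exact Finset.sum_congr rfl fun p _ =>
                Finset.sum_congr rfl fun r _ => by ring
          _ = ∑ j', (if j = j' then (1 : ℂ) else 0) *
                ((if j' = j then (1 : ℂ) else 0) * S j' q s) := by
              refine Finset.sum_congr rfl fun j' _ => ?_
              rw [show (∑ p, star (a j p) * a j' p) = _ from ha j j',
                show (∑ r, star (a j' r) * a j r) = _ from ha j' j]
          _ = S j q s := by simp
      have e2 : (∑ p, ∑ r, star (a j p) * a j r * ρ (p, q) (r, s))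
          = ∑ i, (star (a j) ⬝ᵥ (R i *ᵥ a j)) * (b i q * star (b i s)) := by
        simp only [expandB, Finset.mul_sum]
        rw [swap3]
        refine Finset.sum_congr rfl fun i _ => ?_
        simp only [dotProduct, Matrix.mulVec, Pi.star_apply, Finset.sum_mul,
          Finset.mul_sum]
        exact Finset.sum_congr rfl fun p _ =>
          Finset.sum_congr rfl fun r _ => by ring
      exact e1.symm.trans e2
    ext ⟨p, q⟩ ⟨r, s⟩
    rw [expandA]
    simp only [Matrix.sum_apply, Pi.smul_apply, Matrix.smul_apply, smul_eq_mul,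
      outer, kronVec, Matrix.vecMulVec_apply, Pi.star_apply, star_mul', hcc, key,
      Finset.mul_sum]
    refine Finset.sum_congr rfl fun j _ => Finset.sum_congr rfl fun i _ => by ring
end

section
/- Let ρ be a positive semidefinite d_A·d_B × d_A·d_B complex matrix, viewed as a d_A × d_A block matrix with d_B × d_B blocks ρ^B_{ij}. Then the following are equivalent: (1) there exist linearly independent vectors b_1, …, b_n ∈ ℂ^{d_B} and positive semidefinite d_A × d_A matrices ρ_1, …, ρ_n such that ρ = Σ_{m=1}^n ρ_m ⊗ (b_m b_m†); (2) there exist linearly independent vectors b_1, …, b_n ∈ ℂ^{d_B} and complex numbers c_{i j m} such that for all i, j one has ρ^B_{ij} = Σ_{m=1}^n c_{i j m} · (b_m b_m†). -/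
open Matrix
open scoped Kronecker ComplexOrder

/-- The `(i,j)` block (of size `dB × dB`) of a bipartite matrix on
`ℂ^{dA} ⊗ ℂ^{dB}`. -/
def blockB {dA dB : ℕ} (ρ : Matrix (Fin dA × Fin dB) (Fin dA × Fin dB) ℂ)
    (i j : Fin dA) : Matrix (Fin dB) (Fin dB) ℂ :=
  Matrix.of fun k l => ρ (i, k) (j, l)

lemma exists_dual_family {n d : ℕ} {b : Fin n → (Fin d → ℂ)}
    (hli : LinearIndependent ℂ b) :
    ∃ a : Fin n → (Fin d → ℂ),
      ∀ m k, a m ⬝ᵥ b k = if m = k then 1 else 0 := by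
  have hinj : LinearMap.ker (Finsupp.linearCombination ℂ b) = ⊥ :=
    LinearMap.ker_eq_bot.mpr hli
  obtain ⟨S, hS⟩ := (Finsupp.linearCombination ℂ b).exists_leftInverse_of_injective hinj
  refine ⟨fun m l => S (Pi.single l 1) m, fun m k => ?_⟩
  have hbk : (∑ l, b k l • (Pi.single l 1 : Fin d → ℂ)) = b k := by
    ext l
    simp [Pi.single_apply, mul_comm]
  have h1 : S (b k) = Finsupp.single k 1 := by
    have := congrFun (congrArg DFunLike.coe hS) (Finsupp.single k 1)
    simpa [Finsupp.linearCombination_single] using this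
  calc (∑ l, S (Pi.single l 1) m * b k l)
      = (S (∑ l, b k l • (Pi.single l 1 : Fin d → ℂ))) m := by
        simp [map_sum, Finsupp.coe_finset_sum, Finset.sum_apply, mul_comm]
    _ = (Finsupp.single k (1:ℂ)) m := by rw [hbk, h1]
    _ = if m = k then 1 else 0 := by simp [Finsupp.single_apply, eq_comm]

lemma outer_mulVec {d : ℕ} (v w : Fin d → ℂ) :
    outer v *ᵥ w = (star v ⬝ᵥ w) • v := by
  ext k
  simp only [outer, Matrix.mulVec, dotProduct, Matrix.vecMulVec_apply,
    Pi.smul_apply, Pi.star_apply, smul_eq_mul, Finset.sum_mul]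
  exact Finset.sum_congr rfl fun l _ => by ring

lemma sum_mulVec' {d : Type*} [Fintype d] {ι : Type*} (s : Finset ι)
    (A : ι → Matrix d d ℂ) (v : d → ℂ) :
    (∑ i ∈ s, A i) *ᵥ v = ∑ i ∈ s, A i *ᵥ v := by
  ext k
  simp only [Matrix.mulVec, dotProduct, Matrix.sum_apply, Finset.sum_apply,
    Finset.sum_mul]
  exact Finset.sum_comm

lemma dotProduct_sum' {d : Type*} [Fintype d] {ι : Type*} (s : Finset ι)
    (v : d → ℂ) (w : ι → (d → ℂ)) :
    v ⬝ᵥ (∑ i ∈ s, w i) = ∑ i ∈ s, v ⬝ᵥ w i := by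
  simp only [dotProduct, Finset.sum_apply, Finset.mul_sum]
  exact Finset.sum_comm

lemma dot_kron {p q : ℕ} (A : Matrix (Fin p) (Fin p) ℂ) (B : Matrix (Fin q) (Fin q) ℂ)
    (x : Fin p → ℂ) (w : Fin q → ℂ) :
    star (fun r : Fin p × Fin q => x r.1 * w r.2) ⬝ᵥ
      ((A ⊗ₖ B) *ᵥ fun r : Fin p × Fin q => x r.1 * w r.2)
    = (star x ⬝ᵥ A *ᵥ x) * (star w ⬝ᵥ B *ᵥ w) := by
  simp only [dotProduct, Matrix.mulVec, Fintype.sum_prod_type, Pi.star_apply,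
    Matrix.kroneckerMap_apply]
  rw [Finset.sum_mul_sum]
  refine Finset.sum_congr rfl fun i _ => Finset.sum_congr rfl fun k _ => ?_
  conv_rhs => rw [mul_mul_mul_comm, ← star_mul', Finset.sum_mul_sum]
  exact congrArg (star (x i * w k) * ·)
    (Finset.sum_congr rfl fun j _ => Finset.sum_congr rfl fun l _ => by ring)

/-- Theorem 1, generalized-classical case: a positive semidefinite bipartite
matrix is generalized-classical with respect to the second party iff all of
its blocks are simultaneously "diagonal" in a common linearly independent
family `{b_m}`, i.e. linear combinations of the `b_m b_m†`. -/
theorem genClassical_iff_blocks_diagonal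
    {dA dB : ℕ}
    (ρ : Matrix (Fin dA × Fin dB) (Fin dA × Fin dB) ℂ)
    (hρ : ρ.PosSemidef) :
    (∃ (n : ℕ) (b : Fin n → (Fin dB → ℂ))
        (ρm : Fin n → Matrix (Fin dA) (Fin dA) ℂ),
      LinearIndependent ℂ b ∧ (∀ m, (ρm m).PosSemidef) ∧
      ρ = ∑ m, ρm m ⊗ₖ outer (b m)) ↔
    (∃ (n : ℕ) (b : Fin n → (Fin dB → ℂ)) (c : Fin dA → Fin dA → Fin n → ℂ),
      LinearIndependent ℂ b ∧
      ∀ i j, blockB ρ i j = ∑ m, c i j m • outer (b m)) := by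
  constructor
  · rintro ⟨n, b, ρm, hli, _, rfl⟩
    refine ⟨n, b, fun i j m => ρm m i j, hli, fun i j => ?_⟩
    ext k l
    simp [blockB, Matrix.sum_apply, Matrix.kroneckerMap_apply]
  · rintro ⟨n, b, c, hli, hblocks⟩
    obtain ⟨a, ha⟩ := exists_dual_family hli
    set u : Fin n → (Fin dB → ℂ) := fun m => star (a m) with hu
    have hau : ∀ m, star (u m) = a m := fun m => star_star (a m)
    -- the dual vectors pick out the coefficients
    have hpick : ∀ m m', star (u m) ⬝ᵥ (outer (b m') *ᵥ u m)
        = if m = m' then 1 else 0 := by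
      intro m m'
      rw [outer_mulVec, dotProduct_smul, hau, smul_eq_mul, ha m m', hu]
      rw [star_dotProduct_star, ha m m']
      split <;> simp
    have key : ∀ (i j : Fin dA) (m : Fin n),
        a m ⬝ᵥ (blockB ρ i j *ᵥ u m) = c i j m := by
      intro i j m
      rw [hblocks i j, sum_mulVec', dotProduct_sum']
      have : ∀ m', a m ⬝ᵥ ((c i j m' • outer (b m')) *ᵥ u m)
          = if m = m' then c i j m' else 0 := by
        intro m'
        rw [Matrix.smul_mulVec, dotProduct_smul, ← hau m, hpick m m']
        split <;> simp
      rw [Finset.sum_congr rfl fun m' _ => this m']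
      simp
    -- the blocks are conjugate-transposes of each other
    have hbt : ∀ i j, (blockB ρ j i)ᴴ = blockB ρ i j := by
      intro i j
      ext k l
      simp only [Matrix.conjTranspose_apply, blockB, Matrix.of_apply]
      exact hρ.isHermitian.apply (i, k) (j, l)
    -- the matrices ρm and the reconstruction
    set ρm : Fin n → Matrix (Fin dA) (Fin dA) ℂ :=
      fun m => Matrix.of fun i j => c i j m with hρm
    have hsum : ρ = ∑ m, ρm m ⊗ₖ outer (b m) := by
      ext ⟨i, k⟩ ⟨j, l⟩
      have := congrFun (congrFun (congrArg (fun M => (M : Matrix (Fin dB) (Fin dB) ℂ))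
        (hblocks i j)) k) l
      simp only [blockB, Matrix.of_apply, Matrix.sum_apply, Pi.smul_apply,
        Matrix.smul_apply, smul_eq_mul] at this
      simp only [Matrix.sum_apply, Matrix.kroneckerMap_apply, hρm, Matrix.of_apply]
      exact this
    refine ⟨n, b, ρm, hli, fun m => .of_dotProduct_mulVec_nonneg ?_ ?_, hsum⟩
    · -- Hermitian
      ext i j
      show star (ρm m j i) = ρm m i j
      have h1 : ρm m j i = a m ⬝ᵥ (blockB ρ j i *ᵥ u m) := (key j i m).symm
      have h2 : ρm m i j = a m ⬝ᵥ (blockB ρ i j *ᵥ u m) := (key i j m).symm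
      rw [h1, h2, ← hau m, star_dotProduct, star_star, Matrix.star_mulVec, hau m, hbt,
        ← dotProduct_mulVec]
    · -- quadratic form
      intro x
      have h0 := hρ.dotProduct_mulVec_nonneg (fun p : Fin dA × Fin dB => x p.1 * u m p.2)
      have heq : star (fun p : Fin dA × Fin dB => x p.1 * u m p.2) ⬝ᵥ
          (ρ *ᵥ fun p : Fin dA × Fin dB => x p.1 * u m p.2)
          = star x ⬝ᵥ (ρm m *ᵥ x) := by
        rw [hsum, sum_mulVec', dotProduct_sum']
        have : ∀ m', star (fun p : Fin dA × Fin dB => x p.1 * u m p.2) ⬝ᵥ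
            ((ρm m' ⊗ₖ outer (b m')) *ᵥ fun p : Fin dA × Fin dB => x p.1 * u m p.2)
            = if m = m' then star x ⬝ᵥ (ρm m' *ᵥ x) else 0 := by
          intro m'
          rw [dot_kron, hpick m m']
          split <;> simp
        rw [Finset.sum_congr rfl fun m' _ => this m']
        simp
      rwa [heq] at h0
end

section
/- Let ρ be a positive semidefinite d_A·d_B × d_A·d_B complex matrix, viewed as a d_A × d_A block matrix with d_B × d_B blocks ρ^B_{ij}. Then the following are equivalent: (1) there exist orthonormal vectors b_1, …, b_n ∈ ℂ^{d_B} and positive semidefinite d_A × d_A matrices ρ_1, …, ρ_n such that ρ = Σ_{m=1}^n ρ_m ⊗ (b_m b_m†); (2) there exist orthonormal vectors b_1, …, b_n ∈ ℂ^{d_B} and complex numbers c_{i j m} such that for all i, j one has ρ^B_{ij} = Σ_{m=1}^n c_{i j m} · (b_m b_m†). -/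
open Matrix
open scoped Kronecker ComplexOrder

lemma quad_outer {n : Type*} [Fintype n] (v w : n → ℂ) :
    star w ⬝ᵥ ((outer v) *ᵥ w) = (star w ⬝ᵥ v) * (star v ⬝ᵥ w) := by
  simp only [outer, vecMulVec, dotProduct, mulVec, Matrix.of_apply, Pi.star_apply,
    Finset.mul_sum, Finset.sum_mul]
  rw [Finset.sum_comm]
  apply Finset.sum_congr rfl; intro k _
  apply Finset.sum_congr rfl; intro l _
  ring

lemma my_sum_mulVec {n ι : Type*} [Fintype n] (s : Finset ι)
    (A : ι → Matrix n n ℂ) (v : n → ℂ) :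
    (∑ i ∈ s, A i) *ᵥ v = ∑ i ∈ s, A i *ᵥ v := by
  ext k
  simp only [mulVec, dotProduct, Matrix.sum_apply, Finset.sum_apply, Finset.sum_mul]
  exact Finset.sum_comm

lemma my_dotProduct_sum {n ι : Type*} [Fintype n] (s : Finset ι)
    (w : n → ℂ) (f : ι → n → ℂ) :
    w ⬝ᵥ (∑ i ∈ s, f i) = ∑ i ∈ s, w ⬝ᵥ f i := by
  simp only [dotProduct, Finset.sum_apply, Finset.mul_sum]
  exact Finset.sum_comm

/-- Theorem 1, classical case: a positive semidefinite bipartite matrix is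
classical with respect to the second party iff all of its blocks are
simultaneously diagonal in a common orthonormal family `{b_m}`. -/
theorem classical_iff_blocks_diagonal
    {dA dB : ℕ}
    (ρ : Matrix (Fin dA × Fin dB) (Fin dA × Fin dB) ℂ)
    (hρ : ρ.PosSemidef) :
    (∃ (n : ℕ) (b : Fin n → (Fin dB → ℂ))
        (ρm : Fin n → Matrix (Fin dA) (Fin dA) ℂ),
      (∀ k l, star (b k) ⬝ᵥ b l = if k = l then 1 else 0) ∧
      (∀ m, (ρm m).PosSemidef) ∧
      ρ = ∑ m, ρm m ⊗ₖ outer (b m)) ↔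
    (∃ (n : ℕ) (b : Fin n → (Fin dB → ℂ)) (c : Fin dA → Fin dA → Fin n → ℂ),
      (∀ k l, star (b k) ⬝ᵥ b l = if k = l then 1 else 0) ∧
      ∀ i j, blockB ρ i j = ∑ m, c i j m • outer (b m)) := by
  constructor
  · rintro ⟨n, b, ρm, hb, _, hρeq⟩
    refine ⟨n, b, fun i j m => ρm m i j, hb, fun i j => ?_⟩
    ext k l
    simp [blockB, hρeq, Matrix.sum_apply, Matrix.kroneckerMap_apply]
  · rintro ⟨n, b, c, hb, hblock⟩
    -- the compression map `I ⊗ b m`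
    set E : Fin n → Matrix (Fin dA × Fin dB) (Fin dA) ℂ :=
      fun m => Matrix.of fun p j => if p.1 = j then b m p.2 else 0 with hE
    set ρm : Fin n → Matrix (Fin dA) (Fin dA) ℂ :=
      fun m => (E m)ᴴ * ρ * (E m) with hρm
    have hcompr : ∀ m i j, ρm m i j = star (b m) ⬝ᵥ (blockB ρ i j *ᵥ b m) := by
      intro m i j
      simp only [hρm, hE, Matrix.mul_apply, Matrix.conjTranspose_apply, Matrix.of_apply,
        Fintype.sum_prod_type, apply_ite, star_zero, ite_mul, mul_ite, zero_mul, mul_zero,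
        Finset.sum_ite_eq, Finset.sum_ite_eq', Finset.mem_univ, if_true]
      simp only [ite_mul, zero_mul, Finset.sum_ite_irrel, Finset.sum_const_zero,
        Finset.sum_ite_eq, Finset.sum_ite_eq', Finset.mem_univ, if_true]
      simp only [dotProduct, mulVec, blockB, Matrix.of_apply, Pi.star_apply, dotProduct,
        Finset.mul_sum, Finset.sum_mul]
      rw [Finset.sum_comm]
      apply Finset.sum_congr rfl; intro k _
      apply Finset.sum_congr rfl; intro l _
      ring
    have hent : ∀ m i j, ρm m i j = c i j m := by
      intro m i j
      rw [hcompr, hblock i j, my_sum_mulVec]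
      have : ∀ m', (c i j m' • outer (b m')) *ᵥ b m = c i j m' • ((outer (b m')) *ᵥ b m) := by
        intro m'; rw [Matrix.smul_mulVec]
      simp only [this]
      rw [my_dotProduct_sum]
      rw [Finset.sum_eq_single m]
      · simp [dotProduct_smul, quad_outer, hb m m]
      · intro m' _ hm'
        have h1 := hb m m'
        have h2 := hb m' m
        rw [if_neg (fun h => hm' h.symm)] at h1
        simp [dotProduct_smul, quad_outer, h1]
      · simp
    refine ⟨n, b, ρm, hb, fun m => hρ.conjTranspose_mul_mul_same (E m), ?_⟩
    ext ⟨i, k⟩ ⟨j, l⟩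
    have hb1 : ρ (i, k) (j, l) = blockB ρ i j k l := rfl
    rw [hb1, hblock i j]
    simp only [Matrix.sum_apply, Matrix.kroneckerMap_apply, Matrix.smul_apply, hent,
      smul_eq_mul]
end

section
/- Let A_1, …, A_m be Hermitian n × n complex matrices. Then there exists an invertible n × n complex matrix P such that P A_i P† is a diagonal matrix for every i = 1, …, m, if and only if there exists a Hermitian n × n matrix W with W − I positive semidefinite such that A_i W A_j = A_j W A_i for all 1 ≤ i, j ≤ m. -/
open Matrix
open scoped ComplexOrder

set_option maxHeartbeats 1000000
set_option maxRecDepth 8000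

section Helpers

variable {n : ℕ}

/-- A positive definite complex matrix can be scaled to dominate the identity. -/
lemma exists_smul_sub_one_posSemidef {M : Matrix (Fin n) (Fin n) ℂ} (hM : M.PosDef) :
    ∃ c : ℝ, 0 < c ∧ (((c : ℂ) • M) - 1).PosSemidef := by
  have hH : M.IsHermitian := hM.isHermitian
  have hμ : ∀ k, 0 < hH.eigenvalues k := hM.eigenvalues_pos
  have hsum : (0:ℝ) ≤ ∑ k, (hH.eigenvalues k)⁻¹ :=
    Finset.sum_nonneg fun k _ => by have := hμ k; positivity
  refine ⟨1 + ∑ k, (hH.eigenvalues k)⁻¹, by linarith, ?_⟩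
  set μ : Fin n → ℝ := hH.eigenvalues with hμdef
  set c : ℝ := 1 + ∑ k, (μ k)⁻¹ with hc
  have hck : ∀ k, (1:ℝ) ≤ c * μ k := by
    intro k
    have h1 : (μ k)⁻¹ ≤ c := by
      have h2 : (μ k)⁻¹ ≤ ∑ j, (μ j)⁻¹ :=
        Finset.single_le_sum (f := fun j => (μ j)⁻¹)
          (fun j _ => by have := hμ j; positivity) (Finset.mem_univ k)
      rw [hc]; linarith
    calc (1:ℝ) = (μ k)⁻¹ * μ k := (inv_mul_cancel₀ (hμ k).ne').symm
    _ ≤ c * μ k := by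
        have := (hμ k).le
        gcongr
  set U : Matrix (Fin n) (Fin n) ℂ := (hH.eigenvectorUnitary : Matrix (Fin n) (Fin n) ℂ) with hU
  have hUU : U * star U = 1 := (Matrix.mem_unitaryGroup_iff).mp hH.eigenvectorUnitary.2
  have key : ((c : ℂ) • M) - 1 =
      U * diagonal (fun k => ((c * μ k - 1 : ℝ) : ℂ)) * Uᴴ := by
    have hD : diagonal (fun k => ((c * μ k - 1 : ℝ) : ℂ))
        = (c : ℂ) • diagonal (RCLike.ofReal ∘ μ) - 1 := by
      ext k l
      rcases eq_or_ne k l with rfl | h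
      · simp only [Matrix.sub_apply, Matrix.smul_apply, Matrix.diagonal_apply_eq,
          Matrix.one_apply_eq, Function.comp_apply, smul_eq_mul, RCLike.ofReal_alg]
        push_cast [Algebra.smul_def]
        rw [Complex.coe_algebraMap]
        ring
      · simp [Matrix.sub_apply, Matrix.smul_apply, Matrix.diagonal_apply_ne _ h,
          Matrix.one_apply_ne h]
    rw [hD, ← Matrix.star_eq_conjTranspose]
    rw [mul_sub, sub_mul, mul_one, hUU]
    rw [Matrix.mul_smul, Matrix.smul_mul]
    rw [hH.spectral_theorem]
    rfl
  rw [key]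
  refine Matrix.PosSemidef.mul_mul_conjTranspose_same ?_ U
  refine Matrix.PosSemidef.diagonal ?_
  intro k
  exact Complex.zero_le_real.2 (by linarith [hck k])

lemma posDef_conjTranspose_mul_self_of_isUnit {P : Matrix (Fin n) (Fin n) ℂ}
    (hP : IsUnit P) : (Pᴴ * P).PosDef := by
  refine Matrix.posDef_iff_dotProduct_mulVec.mpr ⟨Matrix.isHermitian_conjTranspose_mul_self P, fun x hx => ?_⟩
  have hx' : P *ᵥ x ≠ 0 := by
    intro h0
    have hinj := Matrix.mulVec_injective_iff_isUnit.mpr hP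
    exact hx (hinj (by simpa using h0))
  have : star x ⬝ᵥ (Pᴴ * P) *ᵥ x = star (P *ᵥ x) ⬝ᵥ (P *ᵥ x) := by
    rw [← Matrix.mulVec_mulVec, Matrix.dotProduct_mulVec, Matrix.star_mulVec,
      Matrix.vecMul_conjTranspose, star_star, Matrix.dotProduct_mulVec]
  rw [this]
  exact Matrix.dotProduct_star_self_pos_iff.mpr hx'

end Helpers


/-- A commuting family of Hermitian matrices is simultaneously unitarily diagonalizable. -/
lemma exists_unitary_mul_mul_conjTranspose_isDiag {n m : ℕ}
    (B : Fin m → Matrix (Fin n) (Fin n) ℂ)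
    (hBH : ∀ i, (B i).IsHermitian) (hBcomm : ∀ i j, B i * B j = B j * B i) :
    ∃ U : Matrix (Fin n) (Fin n) ℂ, U * Uᴴ = 1 ∧ ∀ i, (U * B i * Uᴴ).IsDiag := by
  classical
  obtain ⟨T, hTdef⟩ : ∃ T : Fin m → Module.End ℂ (EuclideanSpace ℂ (Fin n)),
      T = fun i => Matrix.toEuclideanLin (B i) := ⟨_, rfl⟩
  have hTapp : ∀ i x, T i x = Matrix.toEuclideanLin (B i) x := by
    intro i x; rw [hTdef]
  have hTsym : ∀ i, (T i).IsSymmetric := by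
    intro i
    rw [hTdef]
    exact Matrix.isHermitian_iff_isSymmetric.1 (hBH i)
  have hTm : ∀ i j, T i * T j = Matrix.toEuclideanLin (B i * B j) := by
    intro i j
    apply LinearMap.ext
    intro x
    show T i (T j x) = Matrix.toEuclideanLin (B i * B j) x
    rw [hTapp, hTapp]
    simp [Matrix.toEuclideanLin_apply, Matrix.mulVec_mulVec]
  have hTcomm : Pairwise (Function.onFun Commute T) := by
    intro i j _
    show T i * T j = T j * T i
    rw [hTm, hTm, hBcomm]
  have hOF := LinearMap.IsSymmetric.orthogonalFamily_iInf_eigenspaces hTsym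
  have htop := LinearMap.IsSymmetric.iSup_iInf_eq_top_of_commute hTsym hTcomm
  haveI : Fintype {χ : Fin m → ℂ //
      (⨅ j, Module.End.eigenspace (T j) (χ j)) ≠ ⊥} :=
    hOF.independent.fintypeNeBotOfFiniteDimensional
  have hOF' := hOF.comp
    (f := (Subtype.val : {χ : Fin m → ℂ //
      (⨅ j, Module.End.eigenspace (T j) (χ j)) ≠ ⊥} → (Fin m → ℂ))) Subtype.val_injective
  have hsup : (⨆ χ : {χ : Fin m → ℂ // (⨅ j, Module.End.eigenspace (T j) (χ j)) ≠ ⊥},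
      ⨅ j, Module.End.eigenspace (T j) (χ.1 j)) = ⊤ := by
    rw [← htop]
    apply le_antisymm
    · exact iSup_le fun χ' =>
        le_iSup (fun χ : Fin m → ℂ => ⨅ j, Module.End.eigenspace (T j) (χ j)) χ'.1
    · refine iSup_le fun χ => ?_
      by_cases h : (⨅ j, Module.End.eigenspace (T j) (χ j)) = ⊥
      · simp [h]
      · exact le_iSup (fun χ' : {χ : Fin m → ℂ //
          (⨅ j, Module.End.eigenspace (T j) (χ j)) ≠ ⊥} =>
            ⨅ j, Module.End.eigenspace (T j) (χ'.1 j)) ⟨χ, h⟩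
  have hV : DirectSum.IsInternal
      (fun χ : {χ : Fin m → ℂ // (⨅ j, Module.End.eigenspace (T j) (χ j)) ≠ ⊥} =>
        ⨅ j, Module.End.eigenspace (T j) (χ.1 j)) := by
    rw [hOF'.isInternal_iff]
    rw [hsup, Submodule.top_orthogonal_eq_bot]
  have hn : Module.finrank ℂ (EuclideanSpace ℂ (Fin n)) = n := finrank_euclideanSpace_fin
  set b : OrthonormalBasis (Fin n) ℂ (EuclideanSpace ℂ (Fin n)) :=
    hV.subordinateOrthonormalBasis hn hOF' with hbdef
  set χ : Fin n → Fin m → ℂ :=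
    fun k => (hV.subordinateOrthonormalBasisIndex hn k hOF').1 with hχdef
  have hbk : ∀ k i, T i (b k) = χ k i • b k := by
    intro k i
    have hmem := hV.subordinateOrthonormalBasis_subordinate hn k hOF'
    simp only [Submodule.mem_iInf] at hmem
    exact Module.End.mem_eigenspace_iff.mp (hmem i)
  have hmv : ∀ k i, B i *ᵥ ⇑(b k) = χ k i • ⇑(b k) := by
    intro k i
    have h := hbk k i
    rw [hTapp] at h
    simpa [Matrix.toEuclideanLin_apply] using congr(⇑$h)
  have hinner : ∀ k l, (∑ p, star ((b k) p) * (b l) p) = if k = l then 1 else 0 := by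
    intro k l
    have h := orthonormal_iff_ite.mp b.orthonormal k l
    rw [PiLp.inner_apply] at h
    simp only [RCLike.inner_apply, starRingEnd_apply] at h
    simpa only [mul_comm] using h
  set U : Matrix (Fin n) (Fin n) ℂ := Matrix.of (fun k p => star ((b k) p)) with hUdef
  have hUU : U * Uᴴ = 1 := by
    ext k l
    simp only [Matrix.mul_apply, Matrix.conjTranspose_apply, Matrix.of_apply, star_star,
      Matrix.one_apply, hUdef]
    exact hinner k l
  refine ⟨U, hUU, ?_⟩
  intro i k l hkl
  show (U * B i * Uᴴ) k l = 0
  have hBU : ∀ p, (B i * Uᴴ) p l = (B i *ᵥ ⇑(b l)) p := by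
    intro p
    simp [Matrix.mul_apply, Matrix.conjTranspose_apply, Matrix.mulVec, dotProduct,
      hUdef, star_star]
  rw [mul_assoc, Matrix.mul_apply]
  calc ∑ p, U k p * (B i * Uᴴ) p l
      = ∑ p, star ((b k) p) * ((B i *ᵥ ⇑(b l)) p) := by
        simp only [hBU]; simp only [hUdef, Matrix.of_apply]
    _ = ∑ p, star ((b k) p) * (χ l i * (b l) p) := by
        rw [hmv l i]
        simp [Pi.smul_apply, smul_eq_mul]
    _ = χ l i * ∑ p, star ((b k) p) * (b l) p := by
        rw [Finset.mul_sum]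
        congr 1
        funext p
        ring
    _ = 0 := by rw [hinner k l, if_neg hkl, mul_zero]

/-- Lemma 3 (Shi): a family of Hermitian matrices is simultaneously
diagonalizable by an invertible congruence `A_i ↦ P A_i P†` iff there is a
Hermitian matrix `W ≥ I` with `A_i W A_j = A_j W A_i` for all `i, j`
(a semidefinite feasibility problem). -/
theorem simultaneous_congruence_diagonalization_iff_SDP
    {n m : ℕ} (A : Fin m → Matrix (Fin n) (Fin n) ℂ)
    (hA : ∀ i, (A i).IsHermitian) :
    (∃ P : Matrix (Fin n) (Fin n) ℂ, IsUnit P ∧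
      ∀ i, (P * A i * Pᴴ).IsDiag) ↔
    (∃ W : Matrix (Fin n) (Fin n) ℂ, W.IsHermitian ∧
      (W - 1).PosSemidef ∧
      ∀ i j, A i * W * A j = A j * W * A i) := by
  constructor
  · rintro ⟨P, hP, hdiag⟩
    have hM : (Pᴴ * P).PosDef := posDef_conjTranspose_mul_self_of_isUnit hP
    obtain ⟨c, hc, hpsd⟩ := exists_smul_sub_one_posSemidef hM
    refine ⟨(c : ℂ) • (Pᴴ * P), ?_, hpsd, ?_⟩
    · show ((c : ℂ) • (Pᴴ * P))ᴴ = (c : ℂ) • (Pᴴ * P)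
      rw [Matrix.conjTranspose_smul, hM.isHermitian.eq]
      congr 1
      simp [Complex.star_def, Complex.conj_ofReal]
    · intro i j
      have hPH : IsUnit Pᴴ := by
        have := hP.star
        rwa [Matrix.star_eq_conjTranspose] at this
      have hDcomm : (P * A i * Pᴴ) * (P * A j * Pᴴ) = (P * A j * Pᴴ) * (P * A i * Pᴴ) := by
        rw [← (hdiag i).diagonal_diag, ← (hdiag j).diagonal_diag, diagonal_mul_diagonal,
          diagonal_mul_diagonal]
        exact congrArg diagonal (funext fun p => mul_comm _ _)
      have h1 : P * (A i * (Pᴴ * P) * A j) * Pᴴ = P * (A j * (Pᴴ * P) * A i) * Pᴴ := by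
        simpa only [mul_assoc] using hDcomm
      have key : A i * (Pᴴ * P) * A j = A j * (Pᴴ * P) * A i :=
        hP.mul_left_cancel (hPH.mul_right_cancel h1)
      calc A i * ((c : ℂ) • (Pᴴ * P)) * A j
          = (c : ℂ) • (A i * (Pᴴ * P) * A j) := by
            rw [mul_smul_comm, smul_mul_assoc]
        _ = (c : ℂ) • (A j * (Pᴴ * P) * A i) := by rw [key]
        _ = A j * ((c : ℂ) • (Pᴴ * P)) * A i := by
            rw [mul_smul_comm, smul_mul_assoc]
  · rintro ⟨W, hW, hpsd, hcomm⟩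
    classical
    have hWpos : W.PosDef := by
      have h := Matrix.PosDef.posSemidef_add hpsd Matrix.PosDef.one
      rwa [sub_add_cancel] at h
    obtain ⟨S, hSH, hSS⟩ : ∃ S : Matrix (Fin n) (Fin n) ℂ, S.IsHermitian ∧ S * S = W := by
      open scoped MatrixOrder Matrix.Norms.L2Operator in
      exact ⟨CFC.sqrt W, (Matrix.nonneg_iff_posSemidef.mp (CFC.sqrt_nonneg W)).1,
        CFC.sqrt_mul_sqrt_self W hWpos.posSemidef.nonneg⟩
    have hSU : IsUnit S := by
      have hdet : S.det * S.det = W.det := by rw [← Matrix.det_mul, hSS]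
      have hWdet : IsUnit W.det := (Matrix.isUnit_iff_isUnit_det W).1 hWpos.isUnit
      rw [← hdet] at hWdet
      exact (Matrix.isUnit_iff_isUnit_det S).2 (isUnit_of_mul_isUnit_left hWdet)
    set B : Fin m → Matrix (Fin n) (Fin n) ℂ := fun i => S * A i * S with hBdef
    have hBH : ∀ i, (B i).IsHermitian := by
      intro i
      show (S * A i * S)ᴴ = S * A i * S
      rw [Matrix.conjTranspose_mul, Matrix.conjTranspose_mul, hSH.eq, (hA i).eq, mul_assoc]
    have hBcomm : ∀ i j, B i * B j = B j * B i := by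
      have e : ∀ i j, B i * B j = S * (A i * W * A j) * S := by
        intro i j
        have : B i * B j = S * (A i * (S * S) * A j) * S := by
          simp only [hBdef, mul_assoc]
        rwa [hSS] at this
      intro i j
      rw [e i j, e j i, hcomm i j]
    obtain ⟨U, hUU, hdiagU⟩ := exists_unitary_mul_mul_conjTranspose_isDiag B hBH hBcomm
    have hUdet : IsUnit U.det := IsUnit.of_mul_eq_one (Uᴴ.det)
      (by rw [← Matrix.det_mul, hUU, Matrix.det_one])
    have hUunit : IsUnit U := (Matrix.isUnit_iff_isUnit_det U).2 hUdet
    refine ⟨U * S, hUunit.mul hSU, ?_⟩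
    intro i
    have : U * S * A i * (U * S)ᴴ = U * B i * Uᴴ := by
      rw [Matrix.conjTranspose_mul, hSH.eq, hBdef]
      simp only [mul_assoc]
    rw [this]
    exact hdiagU i
end

section
/- Let ρ be a positive semidefinite d_A·d_B × d_A·d_B complex matrix with trace 1, viewed as a d_A × d_A block matrix with d_B × d_B blocks ρ^B_{ij}, and for a d_A × d_A matrix E define the reduced matrix Tr_A[(E ⊗ I) ρ] = Σ_{i,k} E_{i k} ρ^B_{k i}. Then ρ is classical with respect to the second party (i.e. there exist orthonormal vectors b_1, …, b_n ∈ ℂ^{d_B} and positive semidefinite d_A × d_A matrices ρ_1, …, ρ_n with ρ = Σ_{m=1}^n ρ_m ⊗ (b_m b_m†)) if and only if for every finite family (E_α)_{α} of positive semidefinite d_A × d_A matrices with Σ_α E_α = I (a POVM on the first party), the matrices Tr_A[(E_α ⊗ I) ρ] pairwise commute. -/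
open Matrix
open scoped Kronecker ComplexOrder

/-- The reduced matrix `Tr_A[(E ⊗ I) ρ] = Σ_{i,k} E_{i k} ρ^B_{k i}`. -/
noncomputable def reduced {dA dB : ℕ} (ρ : Matrix (Fin dA × Fin dB) (Fin dA × Fin dB) ℂ)
    (E : Matrix (Fin dA) (Fin dA) ℂ) : Matrix (Fin dB) (Fin dB) ℂ :=
  ∑ i, ∑ k, E i k • blockB ρ k i

section Helpers

lemma mul_vecMulVec' {d : ℕ} (M : Matrix (Fin d) (Fin d) ℂ) (v w : Fin d → ℂ) :
    M * vecMulVec v w = vecMulVec (M *ᵥ v) w := by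
  ext a b
  simp only [Matrix.mul_apply, vecMulVec_apply, Matrix.mulVec, dotProduct,
    Finset.sum_mul]
  congr 1; ext c; ring

lemma vecMulVec_smul_left' {d : ℕ} (c : ℂ) (v w : Fin d → ℂ) :
    vecMulVec (c • v) w = c • vecMulVec v w := by
  ext a b
  simp [vecMulVec_apply, mul_assoc]

lemma outer_mul_outer {d : ℕ} (u v : Fin d → ℂ) :
    outer u * outer v = (star u ⬝ᵥ v) • vecMulVec u (star v) := by
  ext a b
  simp only [outer, Matrix.mul_apply, vecMulVec_apply, Matrix.smul_apply, dotProduct,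
    Finset.sum_mul, smul_eq_mul, Pi.star_apply]
  congr 1; ext c; ring

lemma sum_outer_eq_one {d : ℕ} (b : Fin d → Fin d → ℂ)
    (hb : ∀ k l, star (b k) ⬝ᵥ b l = if k = l then 1 else 0) :
    ∑ m, outer (b m) = 1 := by
  classical
  let U : Matrix (Fin d) (Fin d) ℂ := Matrix.of fun k m => b m k
  have h1 : Uᴴ * U = 1 := by
    ext k l
    simpa [U, Matrix.mul_apply, Matrix.conjTranspose_apply, dotProduct,
      Matrix.one_apply, mul_comm] using hb k l
  have h2 : U * Uᴴ = 1 := mul_eq_one_comm.mp h1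
  ext k l
  have := congrFun (congrFun h2 k) l
  simpa [U, Matrix.mul_apply, Matrix.conjTranspose_apply, outer, vecMulVec_apply,
    Matrix.sum_apply] using this

lemma commute_smul_left' {d : ℕ} {X Y : Matrix (Fin d) (Fin d) ℂ} (h : Commute X Y) (c : ℂ) :
    Commute (c • X) Y := by
  unfold Commute SemiconjBy
  rw [Matrix.smul_mul, Matrix.mul_smul, h.eq]

lemma commute_smul_right' {d : ℕ} {X Y : Matrix (Fin d) (Fin d) ℂ} (h : Commute X Y) (c : ℂ) :
    Commute X (c • Y) := (commute_smul_left' h.symm c).symm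

open LinearMap in
lemma sim_diag {d : ℕ} {ι : Type} [Fintype ι] (A : ι → Matrix (Fin d) (Fin d) ℂ)
    (hH : ∀ r, (A r).IsHermitian) (hC : ∀ r s, Commute (A r) (A s)) :
    ∃ (b : Fin d → (Fin d → ℂ)) (μ : ι → Fin d → ℂ),
      (∀ k l, star (b k) ⬝ᵥ b l = if k = l then 1 else 0) ∧
      (∀ r m, A r *ᵥ b m = μ r m • b m) := by
  classical
  set T : ι → Module.End ℂ (EuclideanSpace ℂ (Fin d)) :=
    fun r => Matrix.toEuclideanLin (A r) with hTdef
  have hT : ∀ r, (T r).IsSymmetric := fun r => Matrix.isHermitian_iff_isSymmetric.mp (hH r)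
  have hmul : ∀ r s, T r * T s = Matrix.toEuclideanLin (A r * A s) := by
    intro r s
    apply LinearMap.ext; intro v
    show Matrix.toEuclideanLin (A r) (Matrix.toEuclideanLin (A s) v) = _
    simp [Matrix.toEuclideanLin_apply, Matrix.mulVec_mulVec]
  have hTC : Pairwise (Function.onFun Commute T) := by
    intro r s _
    show T r * T s = T s * T r
    rw [hmul, hmul, (hC r s).eq]
  set V : (ι → ℂ) → Submodule ℂ (EuclideanSpace ℂ (Fin d)) :=
    fun χ => ⨅ r, Module.End.eigenspace (T r) (χ r) with hVdef
  have hOF := LinearMap.IsSymmetric.orthogonalFamily_iInf_eigenspaces hT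
  have htop : ⨆ χ, V χ = ⊤ := LinearMap.IsSymmetric.iSup_iInf_eq_top_of_commute hT hTC
  have hindep : iSupIndep V := hOF.independent
  have : Fintype {χ // V χ ≠ ⊥} := hindep.fintypeNeBotOfFiniteDimensional
  set S := {χ // V χ ≠ ⊥}
  have hOF' := hOF.comp (Subtype.val_injective : Function.Injective ((↑) : S → (ι → ℂ)))
  have htop' : ⨆ s : S, V s.1 = ⊤ := by
    apply le_antisymm le_top
    rw [← htop]
    apply iSup_le
    intro χ
    by_cases h : V χ = ⊥
    · simp [h]
    · exact le_iSup (fun s : S => V s.1) ⟨χ, h⟩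
  have hInt : DirectSum.IsInternal (fun s : S => V s.1) := by
    rw [hOF'.isInternal_iff]
    rw [htop', Submodule.top_orthogonal_eq_bot]
  have hn : Module.finrank ℂ (EuclideanSpace ℂ (Fin d)) = d := by
    simp [finrank_euclideanSpace]
  let b0 : OrthonormalBasis (Fin d) ℂ (EuclideanSpace ℂ (Fin d)) :=
    hInt.subordinateOrthonormalBasis hn hOF'
  have hmem : ∀ m : Fin d, b0 m ∈ V (hInt.subordinateOrthonormalBasisIndex hn m hOF').1 :=
    fun m => hInt.subordinateOrthonormalBasis_subordinate hn m hOF'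
  refine ⟨fun m => (WithLp.equiv 2 _) (b0 m),
    fun r m => (hInt.subordinateOrthonormalBasisIndex hn m hOF').1 r, ?_, ?_⟩
  · intro k l
    have := b0.orthonormal
    rw [orthonormal_iff_ite] at this
    have h2 := this k l
    rwa [EuclideanSpace.inner_eq_star_dotProduct, dotProduct_comm] at h2
  · intro r m
    have h1 : b0 m ∈ Module.End.eigenspace (T r)
        ((hInt.subordinateOrthonormalBasisIndex hn m hOF').1 r) :=
      (Submodule.mem_iInf _).mp (hmem m) r
    rw [Module.End.mem_eigenspace_iff] at h1
    have h2 : Matrix.toEuclideanLin (A r) (b0 m) =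
        ((hInt.subordinateOrthonormalBasisIndex hn m hOF').1 r) • b0 m := h1
    exact congrArg (WithLp.equiv 2 _) h2

lemma psd_of_small {d : ℕ} (H : Matrix (Fin d) (Fin d) ℂ) (hH : H.IsHermitian)
    (C : ℝ) (hC : C = ∑ i, ∑ j, ‖H i j‖) (s : ℝ)
    (hs : |s| ≤ (4 * (C + 1))⁻¹) :
    ((((4:ℝ)⁻¹ : ℝ) : ℂ) • 1 + (s : ℂ) • H).PosSemidef := by
  have hC0 : 0 ≤ C := by
    rw [hC]
    exact Finset.sum_nonneg fun i _ => Finset.sum_nonneg fun j _ => norm_nonneg _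
  rw [Matrix.posSemidef_iff_dotProduct_mulVec]
  constructor
  · show _ = _
    rw [conjTranspose_add, conjTranspose_smul, conjTranspose_smul, conjTranspose_one, hH.eq]
    simp [Complex.star_def, Complex.conj_ofReal]
  · intro x
    set z : ℂ := star x ⬝ᵥ (H *ᵥ x) with hz
    set S : ℝ := ∑ k, Complex.normSq (x k) with hSdef
    have hS0 : 0 ≤ S := Finset.sum_nonneg fun k _ => Complex.normSq_nonneg _
    have hxx : star x ⬝ᵥ x = (S : ℂ) := by
      rw [hSdef]
      push_cast
      simp [dotProduct, Complex.normSq_eq_conj_mul_self, Complex.star_def]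
    have hzreal : (starRingEnd ℂ) z = z := by
      show star z = z
      calc star z = star (star x ⬝ᵥ H *ᵥ x) := by rw [hz]
        _ = star (H *ᵥ x) ⬝ᵥ star (star x) := (star_dotProduct_star _ _).symm
        _ = (star x ᵥ* Hᴴ) ⬝ᵥ x := by rw [star_mulVec, star_star]
        _ = star x ⬝ᵥ (H *ᵥ x) := by rw [hH.eq, ← dotProduct_mulVec]
        _ = z := hz.symm
    have hzim : z.im = 0 := by
      have := congrArg Complex.im hzreal
      simp only [Complex.conj_im] at this
      linarith
    have hxk : ∀ k, ‖x k‖ ^ 2 ≤ S := by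
      intro k
      rw [Complex.sq_norm, hSdef]
      exact Finset.single_le_sum (fun k _ => Complex.normSq_nonneg (x k)) (Finset.mem_univ k)
    have hxij : ∀ i j, ‖x i‖ * ‖x j‖ ≤ S := by
      intro i j
      nlinarith [hxk i, hxk j, norm_nonneg (x i), norm_nonneg (x j),
        sq_nonneg (‖x i‖ - ‖x j‖)]
    have habs : ‖z‖ ≤ C * S := by
      have h1 : ‖z‖ ≤ ∑ i, ‖star (x i) * ((H *ᵥ x) i)‖ := by
        rw [hz]
        exact norm_sum_le _ _
      have h2 : ∀ i, ‖star (x i) * ((H *ᵥ x) i)‖ ≤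
          ∑ j, ‖H i j‖ * (‖x i‖ * ‖x j‖) := by
        intro i
        rw [norm_mul]
        have h3 : ‖(H *ᵥ x) i‖ ≤ ∑ j, ‖H i j‖ * ‖x j‖ := by
          refine le_trans (norm_sum_le Finset.univ (fun j => H i j * x j)) ?_
          exact le_of_eq (Finset.sum_congr rfl fun j _ => norm_mul _ _)
        calc ‖star (x i)‖ * ‖(H *ᵥ x) i‖
            ≤ ‖x i‖ * ∑ j, ‖H i j‖ * ‖x j‖ := by
              rw [show ‖star (x i)‖ = ‖x i‖ from Complex.norm_conj _]
              exact mul_le_mul_of_nonneg_left h3 (norm_nonneg _)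
          _ = ∑ j, ‖H i j‖ * (‖x i‖ * ‖x j‖) := by
              rw [Finset.mul_sum]; exact Finset.sum_congr rfl fun j _ => by ring
      calc ‖z‖ ≤ ∑ i, ∑ j, ‖H i j‖ * (‖x i‖ * ‖x j‖) :=
            le_trans h1 (Finset.sum_le_sum fun i _ => h2 i)
        _ ≤ ∑ i, ∑ j, ‖H i j‖ * S := by
            refine Finset.sum_le_sum fun i _ => Finset.sum_le_sum fun j _ => ?_
            exact mul_le_mul_of_nonneg_left (hxij i j) (norm_nonneg _)
        _ = C * S := by rw [hC, Finset.sum_mul]; exact Finset.sum_congr rfl fun i _ => by rw [Finset.sum_mul]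
    have hexp : star x ⬝ᵥ (((((4:ℝ)⁻¹ : ℝ) : ℂ) • 1 + (s : ℂ) • H) *ᵥ x)
        = (((4:ℝ)⁻¹ : ℝ) : ℂ) * (S : ℂ) + (s : ℂ) * z := by
      rw [Matrix.add_mulVec, Matrix.smul_mulVec, Matrix.smul_mulVec,
        Matrix.one_mulVec, dotProduct_add, dotProduct_smul,
        dotProduct_smul, hxx, hz]
      simp [smul_eq_mul]
    rw [hexp]
    rw [Complex.le_def]
    constructor
    · simp only [Complex.add_re, Complex.mul_re, Complex.ofReal_re, Complex.ofReal_im,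
        Complex.zero_re, hzim]
      have hare : |z.re| ≤ C * S := le_trans (Complex.abs_re_le_norm z) habs
      have hsa : |s * z.re| ≤ (4 * (C + 1))⁻¹ * (C * S) := by
        rw [abs_mul]
        exact mul_le_mul hs hare (abs_nonneg _) (by positivity)
      have hkey : (4 * (C + 1))⁻¹ * (C * S) ≤ 4⁻¹ * S := by
        rw [mul_inv]
        have h5 : (C + 1)⁻¹ * (C * S) ≤ S := by
          rw [inv_mul_le_iff₀ (by linarith)]
          nlinarith
        calc (4:ℝ)⁻¹ * (C + 1)⁻¹ * (C * S) = 4⁻¹ * ((C + 1)⁻¹ * (C * S)) := by ring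
          _ ≤ 4⁻¹ * S := by linarith
      have := neg_abs_le (s * z.re)
      nlinarith
    · simp [hzim, Complex.add_im, Complex.mul_im]

variable {dA dB : ℕ}

lemma reduced_add (ρ : Matrix (Fin dA × Fin dB) (Fin dA × Fin dB) ℂ)
    (E F : Matrix (Fin dA) (Fin dA) ℂ) :
    reduced ρ (E + F) = reduced ρ E + reduced ρ F := by
  simp [reduced, add_smul, Finset.sum_add_distrib]

lemma reduced_sub (ρ : Matrix (Fin dA × Fin dB) (Fin dA × Fin dB) ℂ)
    (E F : Matrix (Fin dA) (Fin dA) ℂ) :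
    reduced ρ (E - F) = reduced ρ E - reduced ρ F := by
  simp [reduced, sub_smul, Finset.sum_sub_distrib]

lemma reduced_smul (ρ : Matrix (Fin dA × Fin dB) (Fin dA × Fin dB) ℂ)
    (c : ℂ) (E : Matrix (Fin dA) (Fin dA) ℂ) :
    reduced ρ (c • E) = c • reduced ρ E := by
  simp [reduced, Finset.smul_sum, smul_smul]

lemma reduced_std (ρ : Matrix (Fin dA × Fin dB) (Fin dA × Fin dB) ℂ) (i k : Fin dA) :
    reduced ρ (Matrix.single i k 1) = blockB ρ k i := by
  classical
  unfold reduced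
  rw [Finset.sum_eq_single i]
  · rw [Finset.sum_eq_single k]
    · simp [Matrix.single]
    · intro b _ hb
      simp [Matrix.single, Ne.symm hb]
    · simp
  · intro b _ hb
    apply Finset.sum_eq_zero
    intro c _
    simp [Matrix.single, Ne.symm hb]
  · simp

end Helpers
set_option maxHeartbeats 2000000 in
/-- Theorem 2, bipartite case: a state is classical with respect to the second
party iff for every POVM on the first party the reduced states after the
measurement pairwise commute. -/
theorem classical_iff_reduced_states_commute
    {dA dB : ℕ}
    (ρ : Matrix (Fin dA × Fin dB) (Fin dA × Fin dB) ℂ)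
    (hρ : ρ.PosSemidef) (htr : ρ.trace = 1) :
    (∃ (n : ℕ) (b : Fin n → (Fin dB → ℂ))
        (ρm : Fin n → Matrix (Fin dA) (Fin dA) ℂ),
      (∀ k l, star (b k) ⬝ᵥ b l = if k = l then 1 else 0) ∧
      (∀ m, (ρm m).PosSemidef) ∧
      ρ = ∑ m, ρm m ⊗ₖ outer (b m)) ↔
    (∀ (N : ℕ) (E : Fin N → Matrix (Fin dA) (Fin dA) ℂ),
      (∀ α, (E α).PosSemidef) → (∑ α, E α = 1) →
      ∀ α β, Commute (reduced ρ (E α)) (reduced ρ (E β))) := by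
  classical
  constructor
  · rintro ⟨n, b, ρm, hb, hpsd, hρeq⟩ N E hE hsum α β
    have hblock : ∀ k i, blockB ρ k i = ∑ m, (ρm m) k i • outer (b m) := by
      intro k i; ext a c
      rw [hρeq]
      simp [blockB, Matrix.sum_apply, Matrix.kroneckerMap_apply]
    have houter : ∀ m m', Commute (outer (b m)) (outer (b m')) := by
      intro m m'
      unfold Commute SemiconjBy
      rw [outer_mul_outer, outer_mul_outer, hb, hb]
      by_cases h : m = m'
      · subst h; rfl
      · simp [h, Ne.symm h]
    have key : ∀ G G' : Matrix (Fin dA) (Fin dA) ℂ,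
        Commute (reduced ρ G) (reduced ρ G') := by
      intro G G'
      unfold reduced
      apply Commute.sum_left; intro i _
      apply Commute.sum_left; intro k _
      apply Commute.sum_right; intro i' _
      apply Commute.sum_right; intro k' _
      rw [hblock, hblock]
      apply commute_smul_left'
      apply commute_smul_right'
      apply Commute.sum_left; intro m _
      apply Commute.sum_right; intro m' _
      exact commute_smul_left' (commute_smul_right' (houter m m') _) _
    exact key _ _
  · intro hmeas
    -- Step 1: reduced states of Hermitian matrices commute
    have hHK : ∀ H K : Matrix (Fin dA) (Fin dA) ℂ, H.IsHermitian → K.IsHermitian →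
        Commute (reduced ρ H) (reduced ρ K) := by
      intro H K hHh hKh
      set CH : ℝ := ∑ i, ∑ j, ‖H i j‖ with hCH
      set CK : ℝ := ∑ i, ∑ j, ‖K i j‖ with hCK
      have hCH0 : 0 ≤ CH :=
        Finset.sum_nonneg fun i _ => Finset.sum_nonneg fun j _ => norm_nonneg _
      have hCK0 : 0 ≤ CK :=
        Finset.sum_nonneg fun i _ => Finset.sum_nonneg fun j _ => norm_nonneg _
      set t : ℝ := (4 * (CH + 1))⁻¹ with ht
      set s : ℝ := (4 * (CK + 1))⁻¹ with hs
      have ht0 : 0 < t := by rw [ht]; positivity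
      have hs0 : 0 < s := by rw [hs]; positivity
      set q : ℂ := (((4:ℝ)⁻¹ : ℝ) : ℂ) with hq
      set E : Fin 4 → Matrix (Fin dA) (Fin dA) ℂ :=
        ![q • 1 + (t:ℂ) • H, q • 1 - (t:ℂ) • H, q • 1 + (s:ℂ) • K, q • 1 - (s:ℂ) • K]
        with hE
      have hpos : ∀ α, (E α).PosSemidef := by
        intro α
        fin_cases α
        · exact psd_of_small H hHh CH hCH t (by rw [abs_of_pos ht0])
        · have h := psd_of_small H hHh CH hCH (-t) (by rw [abs_neg, abs_of_pos ht0])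
          show (q • 1 - (t:ℂ) • H).PosSemidef
          have e : q • (1 : Matrix (Fin dA) (Fin dA) ℂ) - (t:ℂ) • H
              = q • 1 + ((-t : ℝ) : ℂ) • H := by push_cast; module
          rw [e]; exact h
        · exact psd_of_small K hKh CK hCK s (by rw [abs_of_pos hs0])
        · have h := psd_of_small K hKh CK hCK (-s) (by rw [abs_neg, abs_of_pos hs0])
          show (q • 1 - (s:ℂ) • K).PosSemidef
          have e : q • (1 : Matrix (Fin dA) (Fin dA) ℂ) - (s:ℂ) • K
              = q • 1 + ((-s : ℝ) : ℂ) • K := by push_cast; module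
          rw [e]; exact h
      have hsum : ∑ α, E α = 1 := by
        rw [Fin.sum_univ_four]
        show (q • 1 + (t:ℂ) • H) + (q • 1 - (t:ℂ) • H) + (q • 1 + (s:ℂ) • K)
            + (q • 1 - (s:ℂ) • K) = 1
        have hq1 : q + q + q + q = 1 := by
          rw [hq]; push_cast; norm_num
        have e : (q • 1 + (t:ℂ) • H) + (q • 1 - (t:ℂ) • H) + (q • 1 + (s:ℂ) • K)
            + (q • 1 - (s:ℂ) • K) = (q + q + q + q) • (1 : Matrix (Fin dA) (Fin dA) ℂ) := by
          module
        rw [e, hq1, one_smul]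
      have h02 := hmeas 4 E hpos hsum 0 2
      have h03 := hmeas 4 E hpos hsum 0 3
      have h12 := hmeas 4 E hpos hsum 1 2
      have h13 := hmeas 4 E hpos hsum 1 3
      have hE0 : reduced ρ (E 0) = q • reduced ρ 1 + (t:ℂ) • reduced ρ H := by
        show reduced ρ (q • 1 + (t:ℂ) • H) = _
        rw [reduced_add, reduced_smul, reduced_smul]
      have hE1 : reduced ρ (E 1) = q • reduced ρ 1 - (t:ℂ) • reduced ρ H := by
        show reduced ρ (q • 1 - (t:ℂ) • H) = _
        rw [reduced_sub, reduced_smul, reduced_smul]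
      have hE2 : reduced ρ (E 2) = q • reduced ρ 1 + (s:ℂ) • reduced ρ K := by
        show reduced ρ (q • 1 + (s:ℂ) • K) = _
        rw [reduced_add, reduced_smul, reduced_smul]
      have hE3 : reduced ρ (E 3) = q • reduced ρ 1 - (s:ℂ) • reduced ρ K := by
        show reduced ρ (q • 1 - (s:ℂ) • K) = _
        rw [reduced_sub, reduced_smul, reduced_smul]
      have hXdiff : reduced ρ (E 0) - reduced ρ (E 1) = ((2*t : ℝ) : ℂ) • reduced ρ H := by
        rw [hE0, hE1]; push_cast; module
      have hYdiff : reduced ρ (E 2) - reduced ρ (E 3) = ((2*s : ℝ) : ℂ) • reduced ρ K := by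
        rw [hE2, hE3]; push_cast; module
      have hc : Commute (reduced ρ (E 0) - reduced ρ (E 1))
          (reduced ρ (E 2) - reduced ρ (E 3)) :=
        (h02.sub_right h03).sub_left (h12.sub_right h13)
      rw [hXdiff, hYdiff] at hc
      have hne : ((2*t : ℝ) : ℂ) * ((2*s : ℝ) : ℂ) ≠ 0 := by
        apply mul_ne_zero <;>
        · simp only [ne_eq, Complex.ofReal_eq_zero]
          positivity
      have heq := hc.eq
      rw [Matrix.smul_mul, Matrix.mul_smul, Matrix.smul_mul, Matrix.mul_smul,
        smul_smul, smul_smul, mul_comm ((2*s : ℝ) : ℂ) ((2*t : ℝ) : ℂ)] at heq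
      exact smul_right_injective (Matrix (Fin dB) (Fin dB) ℂ) hne heq
    -- Step 2: all reduced states commute
    have hdec : ∀ G : Matrix (Fin dA) (Fin dA) ℂ, ∃ H K,
        H.IsHermitian ∧ K.IsHermitian ∧ G = H + Complex.I • K := by
      intro G
      refine ⟨(2:ℂ)⁻¹ • (G + Gᴴ), (-(Complex.I)/2) • (G - Gᴴ), ?_, ?_, ?_⟩
      · show _ = _
        ext a c
        simp only [conjTranspose_apply, Matrix.smul_apply, Matrix.add_apply, smul_eq_mul,
          star_mul', star_add, star_inv₀, star_star]
        rw [show star (2:ℂ) = 2 from by norm_num [Complex.star_def, Complex.ext_iff]]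
        ring
      · show _ = _
        ext a c
        simp only [conjTranspose_apply, Matrix.smul_apply, Matrix.sub_apply, smul_eq_mul,
          star_mul', star_sub, star_star, star_div₀, star_neg, Complex.star_def,
          Complex.conj_I, Complex.conj_conj]
        rw [show (starRingEnd ℂ) 2 = 2 from by norm_num [Complex.ext_iff]]
        ring
      · ext a c
        simp only [Matrix.add_apply, Matrix.smul_apply, Matrix.sub_apply,
          conjTranspose_apply, smul_eq_mul]
        linear_combination (G a c - star (G c a)) / 2 * Complex.I_sq
    have hall : ∀ G G' : Matrix (Fin dA) (Fin dA) ℂ,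
        Commute (reduced ρ G) (reduced ρ G') := by
      intro G G'
      obtain ⟨H1, K1, h1, h2, hG⟩ := hdec G
      obtain ⟨H2, K2, h3, h4, hG'⟩ := hdec G'
      rw [hG, hG', reduced_add, reduced_add, reduced_smul, reduced_smul]
      refine Commute.add_left ?_ ?_
      · exact (hHK H1 H2 h1 h3).add_right (commute_smul_right' (hHK H1 K2 h1 h4) _)
      · exact commute_smul_left'
          ((hHK K1 H2 h2 h3).add_right (commute_smul_right' (hHK K1 K2 h2 h4) _)) _
    have hblk : ∀ i j k l, Commute (blockB ρ i j) (blockB ρ k l) := by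
      intro i j k l
      have h := hall (Matrix.single j i 1) (Matrix.single l k 1)
      rwa [reduced_std, reduced_std] at h
    have hadj : ∀ i j, (blockB ρ i j)ᴴ = blockB ρ j i := by
      intro i j; ext k l
      have h := congrFun (congrFun hρ.1.eq (j, k)) (i, l)
      simpa [Matrix.conjTranspose_apply, blockB] using h
    -- Step 3: simultaneously diagonalize a commuting Hermitian family spanning the blocks
    set F : (Fin dA × Fin dA × Bool) → Matrix (Fin dB) (Fin dB) ℂ := fun p =>
      if p.2.2 then blockB ρ p.1 p.2.1 + blockB ρ p.2.1 p.1
      else Complex.I • (blockB ρ p.1 p.2.1 - blockB ρ p.2.1 p.1) with hF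
    have hFfalse : ∀ i j, F (i, j, false)
        = Complex.I • (blockB ρ i j - blockB ρ j i) := fun i j => rfl
    have hFtrue : ∀ i j, F (i, j, true) = blockB ρ i j + blockB ρ j i := fun i j => rfl
    have hFH : ∀ p, (F p).IsHermitian := by
      rintro ⟨i, j, bb⟩
      cases bb
      · rw [hFfalse]
        show _ = _
        rw [conjTranspose_smul, conjTranspose_sub, hadj, hadj, Complex.star_def,
          Complex.conj_I]
        module
      · rw [hFtrue]
        show _ = _
        rw [conjTranspose_add, hadj, hadj, add_comm]
    have hFC : ∀ p p', Commute (F p) (F p') := by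
      have h1 : ∀ i j p', Commute (blockB ρ i j) (F p') := by
        rintro i j ⟨k, l, b2⟩
        cases b2
        · rw [hFfalse]
          exact commute_smul_right' ((hblk i j k l).sub_right (hblk i j l k)) _
        · rw [hFtrue]
          exact (hblk i j k l).add_right (hblk i j l k)
      rintro ⟨i, j, b1⟩ p'
      cases b1
      · rw [hFfalse]
        exact commute_smul_left' ((h1 i j p').sub_left (h1 j i p')) _
      · rw [hFtrue]
        exact (h1 i j p').add_left (h1 j i p')
    obtain ⟨b, μ, hb, heig⟩ := sim_diag F hFH hFC
    set c : Fin dA → Fin dA → Fin dB → ℂ :=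
      fun i j m => (μ (i, j, true) m - Complex.I * μ (i, j, false) m) / 2 with hcdef
    have hBeig : ∀ i j m, blockB ρ i j *ᵥ b m = c i j m • b m := by
      intro i j m
      have hrec : blockB ρ i j
          = (2:ℂ)⁻¹ • F (i, j, true) - (2:ℂ)⁻¹ • (Complex.I • F (i, j, false)) := by
        rw [hFtrue, hFfalse, smul_smul, smul_smul, mul_assoc, Complex.I_mul_I]
        module
      rw [hrec, Matrix.sub_mulVec, Matrix.smul_mulVec, Matrix.smul_mulVec,
        Matrix.smul_mulVec, heig, heig]
      show _ = ((μ (i, j, true) m - Complex.I * μ (i, j, false) m) / 2) • b m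
      module
    have hc_eq : ∀ i j m, c i j m = star (b m) ⬝ᵥ (blockB ρ i j *ᵥ b m) := by
      intro i j m
      rw [hBeig, dotProduct_smul, hb]
      simp
    have hdiag : ∀ i j, blockB ρ i j = ∑ m, c i j m • outer (b m) := by
      intro i j
      have h1 : blockB ρ i j = blockB ρ i j * ∑ m, outer (b m) := by
        rw [sum_outer_eq_one b hb, mul_one]
      rw [h1, Finset.mul_sum]
      refine Finset.sum_congr rfl fun m _ => ?_
      show blockB ρ i j * vecMulVec (b m) (star (b m)) = _
      rw [mul_vecMulVec', hBeig, vecMulVec_smul_left']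
      rfl
    set ρm : Fin dB → Matrix (Fin dA) (Fin dA) ℂ :=
      fun m => Matrix.of fun i j => c i j m with hρm
    refine ⟨dB, b, ρm, hb, ?_, ?_⟩
    · intro m
      set Vm : Matrix (Fin dA × Fin dB) (Fin dA) ℂ :=
        Matrix.of fun p j => if p.1 = j then b m p.2 else 0 with hVm
      have hfact : ρm m = Vmᴴ * ρ * Vm := by
        ext i j
        show c i j m = _
        rw [hc_eq]
        have hL : star (b m) ⬝ᵥ blockB ρ i j *ᵥ b m
            = ∑ k, ∑ l, star (b m k) * ρ (i, k) (j, l) * b m l := by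
          simp [dotProduct, Matrix.mulVec, blockB, Finset.mul_sum, mul_assoc]
        have h2 : ∀ (p : Fin dA × Fin dB), (Vmᴴ * ρ) i p = ∑ k, star (b m k) * ρ (i, k) p := by
          intro p
          rw [Matrix.mul_apply, Fintype.sum_prod_type]
          rw [Finset.sum_eq_single i]
          · refine Finset.sum_congr rfl fun k _ => ?_
            simp [Matrix.conjTranspose_apply, hVm]
          · intro a' _ ha'
            apply Finset.sum_eq_zero; intro k _
            simp [Matrix.conjTranspose_apply, hVm, ha']
          · simp
        have hR : (Vmᴴ * ρ * Vm) i j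
            = ∑ l, ∑ k, star (b m k) * ρ (i, k) (j, l) * b m l := by
          rw [Matrix.mul_apply, Fintype.sum_prod_type]
          rw [Finset.sum_eq_single j]
          · refine Finset.sum_congr rfl fun l _ => ?_
            rw [h2, Finset.sum_mul]
            refine Finset.sum_congr rfl fun k _ => ?_
            have : Vm (j, l) j = b m l := by simp [hVm]
            rw [this]
          · intro a _ ha
            apply Finset.sum_eq_zero; intro l _
            have : Vm (a, l) j = 0 := by simp [hVm, ha]
            rw [this, mul_zero]
          · simp
        rw [hL, hR, Finset.sum_comm]
      rw [hfact]
      exact hρ.conjTranspose_mul_mul_same Vm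
    · ext ⟨i, k⟩ ⟨j, l⟩
      have h := congrFun (congrFun (hdiag i j) k) l
      simp only [blockB, Matrix.of_apply, Matrix.sum_apply, Matrix.smul_apply,
        smul_eq_mul] at h
      rw [h]
      simp [Matrix.sum_apply, Matrix.kroneckerMap_apply, hρm]
end

section
/- Let b_1, …, b_n be unit vectors in ℂ^d. Then the following are equivalent: (1) the vectors b_1, …, b_n are linearly independent; (2) there exist a real number λ with 0 < λ ≤ 1 and d × d complex matrices M_1, …, M_n such that I − Σ_{i=1}^n M_i† M_i is positive semidefinite and M_i (b_j b_j†) M_i† = λ · δ_{ij} · (b_j b_j†) for all i, j. -/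
open Matrix
open scoped ComplexOrder

lemma mul_outer_conjTranspose {d : ℕ} (M : Matrix (Fin d) (Fin d) ℂ) (v : Fin d → ℂ) :
    M * outer v * Mᴴ = outer (M *ᵥ v) := by
  ext i j
  simp only [outer, mul_apply, vecMulVec_apply, mulVec, dotProduct, conjTranspose_apply,
    Pi.star_apply, star_sum, star_mul', Finset.sum_mul, Finset.mul_sum, RCLike.star_def]
  apply Finset.sum_congr rfl; intro k _
  apply Finset.sum_congr rfl; intro l _
  ring

lemma outer_eq_zero {d : ℕ} {v : Fin d → ℂ} (h : outer v = 0) : v = 0 := by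
  funext k
  have h2 := congrFun (congrFun h k) k
  simp only [outer, vecMulVec_apply, Pi.star_apply, Matrix.zero_apply, RCLike.star_def] at h2
  have hsq : Complex.normSq (v k) = 0 := by
    have := congrArg Complex.re h2
    simpa [Complex.mul_conj] using this
  simpa using Complex.normSq_eq_zero.mp hsq

lemma outer_smul {d : ℕ} (c : ℂ) (v : Fin d → ℂ) :
    outer (c • v) = (c * star c) • outer v := by
  ext i j; simp [outer, vecMulVec_apply]; ring

lemma outer_zero {d : ℕ} : outer (0 : Fin d → ℂ) = 0 := by
  ext i j; simp [outer, vecMulVec_apply]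

lemma sum_mulVec_aux {ι : Type*} {d : ℕ} (s : Finset ι) (A : ι → Matrix (Fin d) (Fin d) ℂ)
    (x : Fin d → ℂ) : (∑ i ∈ s, A i) *ᵥ x = ∑ i ∈ s, A i *ᵥ x := by
  funext k
  simp only [Matrix.mulVec, dotProduct, Matrix.sum_apply, Finset.sum_apply, Finset.sum_mul]
  rw [Finset.sum_comm]

lemma mulVec_sum_aux {ι : Type*} {d : ℕ} (s : Finset ι) (A : Matrix (Fin d) (Fin d) ℂ)
    (v : ι → Fin d → ℂ) : A *ᵥ (∑ i ∈ s, v i) = ∑ i ∈ s, A *ᵥ v i := by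
  funext k
  simp only [Matrix.mulVec, dotProduct, Finset.sum_apply, Finset.mul_sum]
  rw [Finset.sum_comm]

lemma dotProduct_sum_aux {ι : Type*} {d : ℕ} (s : Finset ι) (v : Fin d → ℂ)
    (w : ι → Fin d → ℂ) : v ⬝ᵥ (∑ i ∈ s, w i) = ∑ i ∈ s, v ⬝ᵥ w i := by
  simp only [dotProduct, Finset.sum_apply, Finset.mul_sum]
  rw [Finset.sum_comm]

lemma dot_smul_self {d : ℕ} (c : ℂ) (v : Fin d → ℂ) :
    star (c • v) ⬝ᵥ (c • v) = star c * c * (star v ⬝ᵥ v) := by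
  simp only [dotProduct, Pi.smul_apply, Pi.star_apply, smul_eq_mul, star_mul', Finset.mul_sum]
  apply Finset.sum_congr rfl; intro k _; ring

/-- NDLID by a generalized measurement: unit vectors `b_1, …, b_n` admit a
generalized measurement unambiguously discriminating them with success rate
`0 < λ ≤ 1` iff they are linearly independent. -/
theorem NDLID_iff_linearIndependent
    {d n : ℕ} (b : Fin n → (Fin d → ℂ))
    (hunit : ∀ i, star (b i) ⬝ᵥ b i = 1) :
    LinearIndependent ℂ b ↔
    (∃ (lam : ℝ), 0 < lam ∧ lam ≤ 1 ∧
      ∃ M : Fin n → Matrix (Fin d) (Fin d) ℂ,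
        ((1 : Matrix (Fin d) (Fin d) ℂ) - ∑ i, (M i)ᴴ * M i).PosSemidef ∧
        ∀ i j, M i * outer (b j) * (M i)ᴴ =
          (if i = j then (lam : ℂ) else 0) • outer (b j)) := by
  constructor
  · -- forward: construct the measurement
    intro h
    set B : Matrix (Fin d) (Fin n) ℂ := Matrix.of fun k i => b i k with hB
    set G : Matrix (Fin n) (Fin n) ℂ := Bᴴ * B with hG
    have hdet : G.det ≠ 0 := by
      intro h0
      obtain ⟨c, hc0, hcv⟩ := (Matrix.exists_mulVec_eq_zero_iff).mpr h0
      have h1 : star c ⬝ᵥ (G *ᵥ c) = 0 := by rw [hcv]; simp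
      rw [hG, ← Matrix.mulVec_mulVec, Matrix.dotProduct_mulVec, ← Matrix.star_mulVec] at h1
      have hw : B *ᵥ c = 0 := dotProduct_star_self_eq_zero.mp h1
      have h2 : (∑ i, c i • b i) = 0 := by
        funext k
        have := congrFun hw k
        simpa [Matrix.mulVec, dotProduct, hB, mul_comm, Finset.sum_apply] using this
      exact hc0 (funext fun i => Fintype.linearIndependent_iff.mp h c h2 i)
    set C : Matrix (Fin n) (Fin d) ℂ := G⁻¹ * Bᴴ with hC
    have hCB : C * B = 1 := by
      rw [hC, Matrix.mul_assoc, ← hG, Matrix.nonsing_inv_mul G (isUnit_iff_ne_zero.mpr hdet)]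
    have hCb : ∀ i j, C i ⬝ᵥ b j = if i = j then 1 else 0 := by
      intro i j
      have := congrFun (congrFun hCB i) j
      simpa [Matrix.mul_apply, dotProduct, hB, Matrix.one_apply, eq_comm] using this
    set a : Fin n → EuclideanSpace ℂ (Fin d) := fun i => WithLp.toLp 2 (fun k => (starRingEnd ℂ) (C i k)) with ha
    have hden : (0:ℝ) < 1 + ∑ i, ‖a i‖^2 := by positivity
    set lam : ℝ := 1 / (1 + ∑ i, ‖a i‖^2) with hlamdef
    have hlam : 0 < lam := by positivity
    have hlam1 : lam ≤ 1 := by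
      rw [hlamdef, div_le_one hden]
      have : (0:ℝ) ≤ ∑ i, ‖a i‖^2 := by positivity
      linarith
    have hsq : ((Real.sqrt lam : ℂ)) * ((Real.sqrt lam : ℂ)) = (lam : ℂ) := by
      rw [← Complex.ofReal_mul, Real.mul_self_sqrt hlam.le]
    refine ⟨lam, hlam, hlam1, fun i => (Real.sqrt lam : ℂ) • vecMulVec (b i) (C i), ?_, ?_⟩
    · -- PSD condition
      set M : Fin n → Matrix (Fin d) (Fin d) ℂ :=
        fun i => (Real.sqrt lam : ℂ) • vecMulVec (b i) (C i) with hM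
      have hMv : ∀ i (x : Fin d → ℂ),
          M i *ᵥ x = ((Real.sqrt lam : ℂ) * (C i ⬝ᵥ x)) • b i := by
        intro i x
        funext k
        simp only [hM, mulVec, dotProduct, Matrix.smul_apply, vecMulVec_apply, Pi.smul_apply,
          smul_eq_mul, Finset.mul_sum]
        rw [Finset.sum_mul]
        apply Finset.sum_congr rfl; intro l _; ring
      rw [Matrix.posSemidef_iff_dotProduct_mulVec]
      constructor
      · -- Hermitian
        refine Matrix.IsHermitian.sub Matrix.isHermitian_one ?_
        unfold Matrix.IsHermitian
        rw [Matrix.conjTranspose_sum]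
        exact Finset.sum_congr rfl fun i _ =>
          Matrix.isHermitian_conjTranspose_mul_self (M i)
      · intro x
        have hterm : ∀ i, star x ⬝ᵥ (((M i)ᴴ * M i) *ᵥ x)
            = (lam : ℂ) * Complex.normSq (C i ⬝ᵥ x) := by
          intro i
          rw [← Matrix.mulVec_mulVec, Matrix.dotProduct_mulVec, ← Matrix.star_mulVec,
            hMv i x, dot_smul_self, hunit i, mul_one]
          calc star ((Real.sqrt lam : ℂ) * (C i ⬝ᵥ x)) * ((Real.sqrt lam : ℂ) * (C i ⬝ᵥ x))
              = ((Real.sqrt lam : ℂ) * (Real.sqrt lam : ℂ)) *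
                ((starRingEnd ℂ) (C i ⬝ᵥ x) * (C i ⬝ᵥ x)) := by
                rw [star_mul', RCLike.star_def, Complex.conj_ofReal]; ring
            _ = (lam : ℂ) * Complex.normSq (C i ⬝ᵥ x) := by
                rw [hsq, ← Complex.normSq_eq_conj_mul_self]
        have hexpand : star x ⬝ᵥ (((1 : Matrix (Fin d) (Fin d) ℂ) - ∑ i, (M i)ᴴ * M i) *ᵥ x)
            = star x ⬝ᵥ x - (lam : ℂ) * ∑ i, (Complex.normSq (C i ⬝ᵥ x) : ℂ) := by
          rw [Matrix.sub_mulVec, Matrix.one_mulVec, dotProduct_sub,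
            sum_mulVec_aux, dotProduct_sum_aux, Finset.mul_sum]
          congr 1
          exact Finset.sum_congr rfl fun i _ => hterm i
        rw [hexpand]
        set X : EuclideanSpace ℂ (Fin d) := WithLp.toLp 2 x with hX
        have hxx : star x ⬝ᵥ x = ((‖X‖^2 : ℝ) : ℂ) := by
          have h1 : (inner ℂ X X : ℂ) = (‖X‖:ℂ)^2 := inner_self_eq_norm_sq_to_K X
          have h2 : (inner ℂ X X : ℂ) = star x ⬝ᵥ x := by
            simp only [hX, PiLp.inner_apply, RCLike.inner_apply]; simp [dotProduct, mul_comm]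
          rw [← h2, h1]
          push_cast
          ring
        have hs : ∀ i, (C i ⬝ᵥ x) = (inner ℂ (a i) X : ℂ) := by
          intro i
          simp only [hX, ha, PiLp.inner_apply]; simp [RCLike.inner_apply, dotProduct, mul_comm]
        have hub : ∀ i, Complex.normSq (C i ⬝ᵥ x) ≤ ‖a i‖^2 * ‖X‖^2 := by
          intro i
          rw [hs i, Complex.normSq_eq_norm_sq]
          have hin := norm_inner_le_norm (𝕜 := ℂ) (a i) X
          calc ‖(inner ℂ (a i) X : ℂ)‖ ^2 = ‖(inner ℂ (a i) X : ℂ)‖^2 := by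
                rfl
            _ ≤ (‖a i‖ * ‖X‖)^2 := by
                apply pow_le_pow_left₀ (norm_nonneg _) hin
            _ = ‖a i‖^2 * ‖X‖^2 := by ring
        have hreal : star x ⬝ᵥ x - (lam : ℂ) * ∑ i, (Complex.normSq (C i ⬝ᵥ x) : ℂ)
            = (((‖X‖^2 - lam * ∑ i, Complex.normSq (C i ⬝ᵥ x)) : ℝ) : ℂ) := by
          rw [hxx]
          push_cast
          ring
        rw [hreal, Complex.zero_le_real]
        have hbound : lam * ∑ i, Complex.normSq (C i ⬝ᵥ x) ≤ ‖X‖^2 := by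
          calc lam * ∑ i, Complex.normSq (C i ⬝ᵥ x)
              ≤ lam * ∑ i, ‖a i‖^2 * ‖X‖^2 := by
                apply mul_le_mul_of_nonneg_left _ hlam.le
                exact Finset.sum_le_sum fun i _ => hub i
            _ = (lam * ∑ i, ‖a i‖^2) * ‖X‖^2 := by rw [← Finset.sum_mul]; ring
            _ ≤ 1 * ‖X‖^2 := by
                apply mul_le_mul_of_nonneg_right _ (by positivity)
                rw [hlamdef, div_mul_eq_mul_div, one_mul, div_le_one hden]
                linarith
            _ = ‖X‖^2 := one_mul _
        linarith
    · -- measurement condition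
      intro i j
      rw [mul_outer_conjTranspose]
      have hMv : ((Real.sqrt lam : ℂ) • vecMulVec (b i) (C i)) *ᵥ (b j)
          = ((Real.sqrt lam : ℂ) * (if i = j then 1 else 0)) • b i := by
        funext k
        simp only [mulVec, dotProduct, Matrix.smul_apply, vecMulVec_apply, Pi.smul_apply,
          smul_eq_mul]
        rw [← hCb i j]
        simp only [dotProduct]
        rw [Finset.mul_sum, Finset.sum_mul]
        apply Finset.sum_congr rfl; intro l _; ring
      rw [hMv]
      by_cases hij : i = j
      · subst hij
        rw [if_pos rfl, if_pos rfl, mul_one, outer_smul]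
        congr 1
        rw [RCLike.star_def, Complex.conj_ofReal, hsq]
      · rw [if_neg hij, if_neg hij, mul_zero, zero_smul, outer_zero, zero_smul]
  · -- backward: measurement implies linear independence
    rintro ⟨lam, hlam, _, M, _, hM⟩
    rw [Fintype.linearIndependent_iff]
    intro g hg i
    have h1 : ∀ j, i ≠ j → M i *ᵥ b j = 0 := by
      intro j hj
      apply outer_eq_zero
      rw [← mul_outer_conjTranspose, hM i j, if_neg hj, zero_smul]
    have h2 : M i *ᵥ b i ≠ 0 := by
      intro h0
      have hii := hM i i
      rw [mul_outer_conjTranspose, h0, outer_zero, if_pos rfl] at hii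
      have hbne : outer (b i) ≠ 0 := by
        intro hz
        have hu := hunit i
        rw [outer_eq_zero hz] at hu
        simp at hu
      rcases smul_eq_zero.mp hii.symm with hl | hb
      · exact (Complex.ofReal_ne_zero.mpr hlam.ne') hl
      · exact hbne hb
    have h3 : M i *ᵥ (∑ j, g j • b j) = ∑ j, g j • (M i *ᵥ b j) := by
      rw [mulVec_sum_aux]
      exact Finset.sum_congr rfl fun j _ => Matrix.mulVec_smul _ _ _
    rw [hg, Matrix.mulVec_zero] at h3
    have h4 : ∑ j, g j • (M i *ᵥ b j) = g i • (M i *ᵥ b i) := by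
      apply Finset.sum_eq_single
      · intro j _ hj
        rw [h1 j (Ne.symm hj), smul_zero]
      · intro hi; exact absurd (Finset.mem_univ i) hi
    rw [h4] at h3
    rcases smul_eq_zero.mp h3.symm with hgi | hb
    · exact hgi
    · exact absurd hb h2
end
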